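/- Let Θ_1,…,Θ_N be pairwise disjoint compact strictly convex subsets of ℝ³ satisfying the no-shadow condition: for all pairwise distinct indices i, j, k, the convex hull of Θ_i ∪ Θ_j is disjoint from Θ_k. If L is a straight line in ℝ³ whose intersection with the interior of Θ_i is empty for every i (i.e., L is everywhere tangent to the obstacles it meets), then L meets the union Θ_1 ∪ … ∪ Θ_N in at most two points. -/

import Mathlib

/-- Let `Θ_1,…,Θ_N` be pairwise disjoint compact strictly convex subsets
of `ℝ³` satisfying the no-shadow condition: for all pairwise distinct indices `i, j, k`,
the convex hull of `Θ_i ∪ Θ_j` is disjoint from `Θ_k`. If `L` is a straight line in `ℝ³`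
whose intersection with the interior of `Θ_i` is empty for every `i`, then `L` meets the
union `Θ_1 ∪ … ∪ Θ_N` in at most two points. -/
theorem tangent_line_meets_obstacles_in_at_most_two_points
    (N : ℕ) (Θ : Fin N → Set (EuclideanSpace ℝ (Fin 3)))
    (hdisj : Pairwise fun i j => Disjoint (Θ i) (Θ j))
    (hcomp : ∀ i, IsCompact (Θ i))
    (hconv : ∀ i, StrictConvex ℝ (Θ i))
    (hshadow : ∀ i j k : Fin N, i ≠ j → j ≠ k → i ≠ k →
      convexHull ℝ (Θ i ∪ Θ j) ∩ Θ k = ∅)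
    (a v : EuclideanSpace ℝ (Fin 3)) (hv : v ≠ 0)
    (L : Set (EuclideanSpace ℝ (Fin 3)))
    (hL : L = {p | ∃ t : ℝ, p = a + t • v})
    (htan : ∀ i, L ∩ interior (Θ i) = ∅) :
    ∀ x ∈ L ∩ ⋃ i, Θ i, ∀ y ∈ L ∩ ⋃ i, Θ i, ∀ z ∈ L ∩ ⋃ i, Θ i,
      x = y ∨ x = z ∨ y = z := by
  -- the parametrization is injective
  have hinj : ∀ s t : ℝ, a + s • v = a + t • v → s = t := by
    intro s t hst
    have h1 : (s - t) • v = 0 := by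
      have h2 : s • v = t • v := add_left_cancel hst
      rw [sub_smul, h2, sub_self]
    rcases smul_eq_zero.mp h1 with h | h
    · exact sub_eq_zero.mp h
    · exact absurd h hv
  -- any point on L is on L
  have hmemL : ∀ t : ℝ, a + t • v ∈ L := by
    intro t; rw [hL]; exact ⟨t, rfl⟩
  -- intermediate parameter gives a point in the open segment
  have hseg : ∀ s t u : ℝ, s < t → t < u →
      a + t • v ∈ openSegment ℝ (a + s • v) (a + u • v) := by
    intro s t u hst htu
    have hus : (0:ℝ) < u - s := by linarith
    refine ⟨(u - t) / (u - s), (t - s) / (u - s), div_pos (by linarith) hus,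
      div_pos (by linarith) hus, ?_, ?_⟩
    · field_simp; ring
    · have hc : (u - t) / (u - s) * s + (t - s) / (u - s) * u = t := by
        field_simp; ring
      have hsum : (u - t) / (u - s) + (t - s) / (u - s) = 1 := by field_simp; ring
      calc ((u - t) / (u - s)) • (a + s • v) + ((t - s) / (u - s)) • (a + u • v)
          = ((u - t) / (u - s) + (t - s) / (u - s)) • a
            + ((u - t) / (u - s) * s + (t - s) / (u - s) * u) • v := by module
        _ = a + t • v := by rw [hc, hsum, one_smul]
    -- key auxiliary fact
  have aux : ∀ (s t u : ℝ) (i j k : Fin N), s < t → t < u →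
      a + s • v ∈ Θ i → a + t • v ∈ Θ j → a + u • v ∈ Θ k → False := by
    intro s t u i j k hst htu hsi htj huk
    have hne_su : a + s • v ≠ a + u • v := fun h => absurd (hinj _ _ h) (by linarith)
    by_cases hik : i = k
    · subst hik
      have : a + t • v ∈ interior (Θ i) :=
        (hconv i).openSegment_subset hsi huk hne_su (hseg s t u hst htu)
      exact absurd (Set.mem_inter (hmemL t) this) (by rw [htan i]; exact not_false)
    · by_cases hji : j = i
      · subst hji
        have hne_st : a + s • v ≠ a + t • v := fun h => absurd (hinj _ _ h) (by linarith)
        have hmid : a + ((s + t) / 2) • v ∈ openSegment ℝ (a + s • v) (a + t • v) :=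
          hseg s ((s + t) / 2) t (by linarith) (by linarith)
        have : a + ((s + t) / 2) • v ∈ interior (Θ j) :=
          (hconv j).openSegment_subset hsi htj hne_st hmid
        exact absurd (Set.mem_inter (hmemL _) this)
          (by rw [htan j]; exact not_false)
      · by_cases hjk : j = k
        · subst hjk
          have hne_tu : a + t • v ≠ a + u • v := fun h => absurd (hinj _ _ h) (by linarith)
          have hmid : a + ((t + u) / 2) • v ∈ openSegment ℝ (a + t • v) (a + u • v) :=
            hseg t ((t + u) / 2) u (by linarith) (by linarith)
          have : a + ((t + u) / 2) • v ∈ interior (Θ j) :=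
            (hconv j).openSegment_subset htj huk hne_tu hmid
          exact absurd (Set.mem_inter (hmemL _) this)
            (by rw [htan j]; exact not_false)
        · -- i, j, k pairwise distinct: use the no-shadow condition
          have h1 : a + s • v ∈ convexHull ℝ (Θ i ∪ Θ k) :=
            subset_convexHull ℝ _ (Set.mem_union_left _ hsi)
          have h2 : a + u • v ∈ convexHull ℝ (Θ i ∪ Θ k) :=
            subset_convexHull ℝ _ (Set.mem_union_right _ huk)
          have h3 : a + t • v ∈ convexHull ℝ (Θ i ∪ Θ k) :=
            (convex_convexHull ℝ _).segment_subset h1 h2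
              (openSegment_subset_segment ℝ _ _ (hseg s t u hst htu))
          have := hshadow i k j hik (Ne.symm hjk) (fun h => hji h.symm)
          exact absurd (Set.mem_inter h3 htj) (by rw [this]; exact not_false)
  intro x hx y hy z hz
  obtain ⟨hxL, hxU⟩ := hx
  obtain ⟨hyL, hyU⟩ := hy
  obtain ⟨hzL, hzU⟩ := hz
  simp only [Set.mem_iUnion] at hxU hyU hzU
  obtain ⟨i, hxi⟩ := hxU
  obtain ⟨j, hyj⟩ := hyU
  obtain ⟨k, hzk⟩ := hzU
  rw [hL] at hxL hyL hzL
  obtain ⟨tx, rfl⟩ := hxL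
  obtain ⟨ty, rfl⟩ := hyL
  obtain ⟨tz, rfl⟩ := hzL
  by_contra h
  push_neg at h
  obtain ⟨hxy, hxz, hyz⟩ := h
  rcases lt_trichotomy tx ty with h1 | h1 | h1
  · rcases lt_trichotomy ty tz with h2 | h2 | h2
    · exact aux tx ty tz i j k h1 h2 hxi hyj hzk
    · exact hyz (by rw [h2])
    · rcases lt_trichotomy tx tz with h3 | h3 | h3
      · exact aux tx tz ty i k j h3 h2 hxi hzk hyj
      · exact hxz (by rw [h3])
      · exact aux tz tx ty k i j h3 h1 hzk hxi hyj
  · exact hxy (by rw [h1])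
  · rcases lt_trichotomy tx tz with h2 | h2 | h2
    · exact aux ty tx tz j i k h1 h2 hyj hxi hzk
    · exact hxz (by rw [h2])
    · rcases lt_trichotomy ty tz with h3 | h3 | h3
      · exact aux ty tz tx j k i h3 h2 hyj hzk hxi
      · exact hyz (by rw [h3])
      · exact aux tz ty tx k j i h3 h1 hzk hyj hxi
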